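/- Let G₁, G₂ ≤ PSL₂(ℝ) act on ℂ, let G₀ = ⟨z ↦ z+1⟩ ≤ G₁ ∩ G₂, and suppose for every φ ∈ G_i \ G₀ (i = 1,2) one has φ(H) ⊆ Θ, where H = {|Im z| > 1} and Θ = {|Im z| ≤ 1}. Let h be the translation z ↦ z + μ with Im μ ≠ 0, and let k be such that h^k(Θ) ⊆ H. Then Θ₁ = Θ and Θ₂ = h^k(Θ) form a proper interactive pair for G₁ and h^k G₂ h^{−k}, and hence G₁ *_{G₀} h^k G₂ h^{−k} embeds into PSL₂(ℂ). -/

import Mathlib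

open Pointwise

lemma km_pingpong {Γ : Type} [Group Γ] [MulAction Γ ℂ]
    (P : Bool → Γ → Prop) (T : Bool → Set ℂ) (θ : Bool → ℂ)
    (hθ : ∀ b, θ b ∈ T b)
    (hmove : ∀ b g, P b g → ∀ x ∈ T (!b), g • x ∈ T b)
    (hprop : ∀ b g, P b g → ∀ x ∈ T (!b), g • x ≠ θ b) :
    ∀ (L : List (Bool × Γ)) (p : Bool × Γ), (∀ q ∈ p :: L, P q.1 q.2) →
      (p :: L).Chain' (fun a b => a.1 ≠ b.1) →
      ∃ x : ℂ, ((p :: L).map Prod.snd).prod • x ∈ T p.1 ∧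
        ((p :: L).map Prod.snd).prod • x ≠ θ p.1 ∧ (x = θ true ∨ x = θ false) := by
  intro L
  induction L with
  | nil =>
    intro p hP _
    refine ⟨θ (!p.1), ?_, ?_, ?_⟩
    · simp only [List.map_cons, List.map_nil, List.prod_cons, List.prod_nil, mul_one]
      exact hmove _ _ (hP p (List.mem_cons_self)) _ (hθ _)
    · simp only [List.map_cons, List.map_nil, List.prod_cons, List.prod_nil, mul_one]
      exact hprop _ _ (hP p (List.mem_cons_self)) _ (hθ _)
    · cases p.1
      · exact Or.inl rfl
      · exact Or.inr rfl
  | cons q L ih =>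
    intro p hP hchain
    obtain ⟨hpq, hchain'⟩ := List.isChain_cons_cons.1 hchain
    obtain ⟨x, hx1, hx2, hx3⟩ := ih q (fun r hr => hP r (List.mem_cons_of_mem _ hr)) hchain'
    have hq1 : q.1 = !p.1 := by revert hpq; cases p.1 <;> cases q.1 <;> simp
    rw [hq1] at hx1
    refine ⟨x, ?_, ?_, hx3⟩
    · rw [List.map_cons, List.prod_cons, mul_smul]
      exact hmove _ _ (hP p (List.mem_cons_self)) _ hx1
    · rw [List.map_cons, List.prod_cons, mul_smul]
      exact hprop _ _ (hP p (List.mem_cons_self)) _ hx1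

/-- **The Klein–Maskit combination example (§2.3 of Leininger–Reid).**
Let `G₁, G₂ ≤ PSL₂(ℝ)` act on `ℂ` (the group `Γ` plays the role of `PSL₂(ℂ)`), let
`G₀ = ⟨t⟩ = G₁ ⊓ G₂` with `t` acting by `z ↦ z + 1`, and suppose every
`φ ∈ G_i \ G₀` maps `H = {|Im z| > 1}` into `Θ = {|Im z| ≤ 1}`.  Let `h` act by
`z ↦ z + μ` with `Im μ ≠ 0` and let `k` be such that `h^k (Θ) ⊆ H`.  Then
`Θ₁ = Θ` and `Θ₂ = h^k (Θ)` form a proper interactive pair for `G₁` and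
`h^k G₂ h^{-k}`, and hence `G₁ *_{G₀} h^k G₂ h^{-k}` embeds into `Γ`. -/
theorem klein_maskit_example
    {Γ : Type} [Group Γ] [MulAction Γ ℂ]
    (G₁ G₂ : Subgroup Γ) (t h : Γ)
    (ht : ∀ z : ℂ, t • z = z + 1)
    (hG₀ : Subgroup.zpowers t = G₁ ⊓ G₂)
    (μ : ℂ) (hμ : μ.im ≠ 0) (hh : ∀ z : ℂ, h • z = z + μ)
    (hmap₁ : ∀ g, g ∈ G₁ → g ∉ Subgroup.zpowers t →
      ∀ z : ℂ, 1 < |z.im| → |(g • z).im| ≤ 1)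
    (hmap₂ : ∀ g, g ∈ G₂ → g ∉ Subgroup.zpowers t →
      ∀ z : ℂ, 1 < |z.im| → |(g • z).im| ≤ 1)
    (hcomm : Commute h t)
    (k : ℕ) (hk : ∀ z : ℂ, |z.im| ≤ 1 → 1 < |((h ^ k) • z).im|) :
    -- the conjugated second factor and the two ping-pong sets
    (let G₀ : Subgroup Γ := Subgroup.zpowers t
     let G₂' : Subgroup Γ := Subgroup.map (MulAut.conj (h ^ k)).toMonoidHom G₂
     let Θ₁ : Set ℂ := {z : ℂ | |z.im| ≤ 1}
     let Θ₂ : Set ℂ := (h ^ k) • ({z : ℂ | |z.im| ≤ 1} : Set ℂ)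
     -- proper interactive pair
     (Θ₁.Nonempty ∧ Θ₂.Nonempty ∧ Θ₁ ∩ Θ₂ = ∅ ∧
      (∀ g ∈ G₀, ∀ x ∈ Θ₁, g • x ∈ Θ₁) ∧
      (∀ g ∈ G₀, ∀ x ∈ Θ₂, g • x ∈ Θ₂) ∧
      (∀ g, g ∈ G₁ → g ∉ G₀ → ∀ x ∈ Θ₂, g • x ∈ Θ₁) ∧
      (∀ g, g ∈ G₂' → g ∉ G₀ → ∀ x ∈ Θ₁, g • x ∈ Θ₂) ∧
      (∃ θ₁ ∈ Θ₁, ∀ g, g ∈ G₁ → g ∉ G₀ → ∀ x ∈ Θ₂, g • x ≠ θ₁) ∧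
      (∃ θ₂ ∈ Θ₂, ∀ g, g ∈ G₂' → g ∉ G₀ → ∀ x ∈ Θ₁, g • x ≠ θ₂)) ∧
     -- hence the amalgamated product embeds in Γ
     (∀ hle : ∀ b : Bool, G₀ ≤ (if b then G₁ else G₂'),
        Function.Injective
          (Monoid.PushoutI.lift (φ := fun b : Bool => Subgroup.inclusion (hle b))
            (fun b => (if b then G₁ else G₂' : Subgroup Γ).subtype) G₀.subtype
            (fun b => MonoidHom.ext fun x => rfl)))) := by
  classical
  intro G₀ G₂' Θ₁ Θ₂
  -- action formulas
  have htnat : ∀ (n : ℕ) (z : ℂ), t ^ n • z = z + n := by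
    intro n
    induction n with
    | zero => simp
    | succ n ih =>
      intro z
      rw [pow_succ, mul_smul, ht, ih]
      push_cast
      ring
  have htint : ∀ (m : ℤ) (z : ℂ), t ^ m • z = z + m := by
    intro m z
    cases m with
    | ofNat n => simpa using htnat n z
    | negSucc n =>
      rw [zpow_negSucc, inv_smul_eq_iff, htnat]
      push_cast
      ring
  have hAz : ∀ z : ℂ, (h ^ k) • z = z + (k : ℂ) * μ := by
    have : ∀ (n : ℕ) (z : ℂ), h ^ n • z = z + (n : ℂ) * μ := by
      intro n
      induction n with
      | zero => simp
      | succ n ih =>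
        intro z
        rw [pow_succ, mul_smul, hh, ih]
        push_cast
        ring
    exact this k
  have hAinv : ∀ z : ℂ, (h ^ k)⁻¹ • z = z - (k : ℂ) * μ := by
    intro z
    rw [inv_smul_eq_iff, hAz]
    ring
  set c : ℝ := (k : ℝ) * μ.im with hc_def
  have him : ∀ z : ℂ, (z + (k : ℂ) * μ).im = z.im + c := by
    intro z
    simp [hc_def, Complex.add_im, Complex.mul_im]
  have himinv : ∀ z : ℂ, (z - (k : ℂ) * μ).im = z.im - c := by
    intro z
    simp [hc_def, Complex.sub_im, Complex.mul_im]
  have hc1 : ∀ w : ℂ, |w.im| ≤ 1 → 1 < |w.im + c| := by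
    intro w hw
    have := hk w hw
    rwa [hAz, him] at this
  have h0c : 1 < |c| := by simpa using hc1 0 (by simp)
  have hc2 : 2 < |c| := by
    rcases le_or_gt 0 c with hcc | hcc
    · have h1 : 1 < c := by rwa [abs_of_nonneg hcc] at h0c
      have h2 : 1 < |(-Complex.I).im + c| := hc1 (-Complex.I) (by simp)
      have h3 : (-Complex.I).im = -1 := by simp
      rw [h3] at h2
      rw [abs_of_pos (by linarith : (0:ℝ) < -1 + c)] at h2
      rw [abs_of_nonneg hcc]
      linarith
    · have h1 : c < -1 := by rw [abs_of_neg hcc] at h0c; linarith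
      have h2 : 1 < |(Complex.I).im + c| := hc1 Complex.I (by simp)
      have h3 : (Complex.I).im = 1 := by simp
      rw [h3] at h2
      rw [abs_of_neg (by linarith : (1:ℝ) + c < 0)] at h2
      rw [abs_of_neg hcc]
      linarith
  -- facts about Θ₂
  have hΘ₂strip : ∀ x ∈ Θ₂, |x.im - c| ≤ 1 := by
    rintro x ⟨w, hw, rfl⟩
    have hw' : |w.im| ≤ 1 := hw
    show |((h ^ k) • w).im - c| ≤ 1
    rw [hAz, him]
    simpa using hw'
  have hΘ₂H : ∀ x ∈ Θ₂, 1 < |x.im| := by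
    rintro x ⟨w, hw, rfl⟩
    exact hk w hw
  -- commutation
  have hcomm' : ∀ m : ℤ, (h ^ k) * t ^ m = t ^ m * (h ^ k) :=
    fun m => ((hcomm.pow_left k).zpow_right m).eq
  have hconj : ∀ m : ℤ, (h ^ k) * t ^ m * (h ^ k)⁻¹ = t ^ m := by
    intro m
    rw [hcomm' m, mul_inv_cancel_right]
  -- G₂' facts
  have hG₂'mem : ∀ g ∈ G₂', ∃ g₂ ∈ G₂, (h ^ k) * g₂ * (h ^ k)⁻¹ = g := by
    intro g hg
    obtain ⟨g₂, hg₂, rfl⟩ := Subgroup.mem_map.1 hg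
    exact ⟨g₂, hg₂, rfl⟩
  have hG₂'out : ∀ g₂ : Γ, (h ^ k) * g₂ * (h ^ k)⁻¹ ∉ G₀ → g₂ ∉ Subgroup.zpowers t := by
    intro g₂ hout hmem
    obtain ⟨m, rfl⟩ := Subgroup.mem_zpowers_iff.1 hmem
    exact hout (by rw [hconj m]; exact Subgroup.zpow_mem _ (Subgroup.mem_zpowers t) m)
  -- the nine conditions
  have h1 : Θ₁.Nonempty := ⟨0, show |(0:ℂ).im| ≤ 1 by simp⟩
  have h2 : Θ₂.Nonempty := h1.smul_set
  have h3 : Θ₁ ∩ Θ₂ = ∅ := by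
    rw [Set.eq_empty_iff_forall_notMem]
    rintro z ⟨hz1, hz2⟩
    have hz1' : |z.im| ≤ 1 := hz1
    have := hΘ₂H z hz2
    linarith
  have h4 : ∀ g ∈ G₀, ∀ x ∈ Θ₁, g • x ∈ Θ₁ := by
    intro g hg x hx
    obtain ⟨m, rfl⟩ := Subgroup.mem_zpowers_iff.1 hg
    have hx' : |x.im| ≤ 1 := hx
    show |((t ^ m) • x).im| ≤ 1
    rw [htint]
    simpa using hx'
  have h5 : ∀ g ∈ G₀, ∀ x ∈ Θ₂, g • x ∈ Θ₂ := by
    intro g hg x hx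
    obtain ⟨m, rfl⟩ := Subgroup.mem_zpowers_iff.1 hg
    obtain ⟨w, hw, rfl⟩ := hx
    have : (t ^ m) • (h ^ k) • w = (h ^ k) • ((t ^ m) • w) := by
      rw [← mul_smul, ← hcomm' m, mul_smul]
    rw [this]
    exact Set.smul_mem_smul_set (h4 _ (Subgroup.zpow_mem _ (Subgroup.mem_zpowers t) m) w hw)
  have h6 : ∀ g, g ∈ G₁ → g ∉ G₀ → ∀ x ∈ Θ₂, g • x ∈ Θ₁ := by
    intro g hg1 hg0 x hx
    exact hmap₁ g hg1 hg0 x (hΘ₂H x hx)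
  have h7 : ∀ g, g ∈ G₂' → g ∉ G₀ → ∀ x ∈ Θ₁, g • x ∈ Θ₂ := by
    intro g hg hg0 x hx
    obtain ⟨g₂, hg₂, rfl⟩ := hG₂'mem g hg
    have hg₂0 : g₂ ∉ Subgroup.zpowers t := hG₂'out g₂ hg0
    have hx' : |x.im| ≤ 1 := hx
    have hyim : ((h ^ k)⁻¹ • x).im = x.im - c := by rw [hAinv, himinv]
    have hyH : 1 < |((h ^ k)⁻¹ • x).im| := by
      rw [hyim]
      have : |c| - |x.im| ≤ |x.im - c| := by
        have := abs_sub_abs_le_abs_sub c x.im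
        rw [abs_sub_comm] at this
        linarith
      linarith
    have hmem : g₂ • ((h ^ k)⁻¹ • x) ∈ Θ₁ := hmap₂ g₂ hg₂ hg₂0 _ hyH
    have : ((h ^ k) * g₂ * (h ^ k)⁻¹) • x = (h ^ k) • (g₂ • ((h ^ k)⁻¹ • x)) := by
      rw [mul_smul, mul_smul]
    rw [this]
    exact Set.smul_mem_smul_set hmem
  have h8 : ∃ θ₁ ∈ Θ₁, ∀ g, g ∈ G₁ → g ∉ G₀ → ∀ x ∈ Θ₂, g • x ≠ θ₁ := by
    by_cases hex : ∃ g₀, g₀ ∈ G₁ ∧ g₀ ∉ Subgroup.zpowers t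
    · obtain ⟨g₀, hg₀1, hg₀0⟩ := hex
      set x₀ : ℂ := ((-c : ℝ) : ℂ) * Complex.I with hx₀def
      have hx₀im : x₀.im = -c := by simp [hx₀def]
      have hx₀H : 1 < |x₀.im| := by
        rw [hx₀im, abs_neg]
        linarith
      refine ⟨g₀ • x₀, hmap₁ g₀ hg₀1 hg₀0 x₀ hx₀H, ?_⟩
      intro g hg1 hg0 x hx heq
      by_cases hmem : g₀⁻¹ * g ∈ Subgroup.zpowers t
      · obtain ⟨m, hm⟩ := Subgroup.mem_zpowers_iff.1 hmem
        have hxeq : t ^ m • x = x₀ := by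
          rw [hm, mul_smul, heq, inv_smul_smul]
        rw [htint] at hxeq
        have hxim : x.im = -c := by
          have := congrArg Complex.im hxeq
          simpa [hx₀im] using this
        have hstrip := hΘ₂strip x hx
        rw [hxim] at hstrip
        have : |(-c) - c| = 2 * |c| := by
          rw [show -c - c = -(2 * c) by ring, abs_neg, abs_mul]
          norm_num
        rw [this] at hstrip
        linarith
      · have := hmap₁ (g₀⁻¹ * g) (mul_mem (inv_mem hg₀1) hg1) hmem x (hΘ₂H x hx)
        rw [mul_smul, heq, inv_smul_smul] at this
        linarith
    · push_neg at hex
      exact ⟨0, show |(0:ℂ).im| ≤ 1 by simp, fun g hg1 hg0 x _ _ => hg0 (hex g hg1)⟩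
  have h9 : ∃ θ₂ ∈ Θ₂, ∀ g, g ∈ G₂' → g ∉ G₀ → ∀ x ∈ Θ₁, g • x ≠ θ₂ := by
    by_cases hex : ∃ g₀, g₀ ∈ G₂ ∧ g₀ ∉ Subgroup.zpowers t
    · obtain ⟨g₀, hg₀2, hg₀0⟩ := hex
      set y₀ : ℂ := ((c : ℝ) : ℂ) * Complex.I with hy₀def
      have hy₀im : y₀.im = c := by simp [hy₀def]
      have hy₀H : 1 < |y₀.im| := by rw [hy₀im]; linarith
      have hσ : |(g₀ • y₀).im| ≤ 1 := hmap₂ g₀ hg₀2 hg₀0 y₀ hy₀H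
      refine ⟨(h ^ k) • (g₀ • y₀), Set.smul_mem_smul_set hσ, ?_⟩
      intro g hg hg0 x hx heq
      obtain ⟨g₂, hg₂, rfl⟩ := hG₂'mem g hg
      have hg₂0 : g₂ ∉ Subgroup.zpowers t := hG₂'out g₂ hg0
      have hx' : |x.im| ≤ 1 := hx
      set y : ℂ := (h ^ k)⁻¹ • x with hydef
      have hyim : y.im = x.im - c := by rw [hydef, hAinv, himinv]
      have hyH : 1 < |y.im| := by
        rw [hyim]
        have : |c| - |x.im| ≤ |x.im - c| := by
          have := abs_sub_abs_le_abs_sub c x.im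
          rw [abs_sub_comm] at this
          linarith
        linarith
      have hkey : g₂ • y = g₀ • y₀ := by
        have : ((h ^ k) * g₂ * (h ^ k)⁻¹) • x = (h ^ k) • (g₂ • y) := by
          rw [mul_smul, mul_smul, hydef]
        rw [this] at heq
        exact smul_left_cancel _ heq
      by_cases hmem : g₀⁻¹ * g₂ ∈ Subgroup.zpowers t
      · obtain ⟨m, hm⟩ := Subgroup.mem_zpowers_iff.1 hmem
        have hyeq : t ^ m • y = y₀ := by
          rw [hm, mul_smul, hkey, inv_smul_smul]
        rw [htint] at hyeq
        have hyim2 : y.im = c := by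
          have := congrArg Complex.im hyeq
          simpa [hy₀im] using this
        rw [hyim] at hyim2
        have hxim : x.im = 2 * c := by linarith
        rw [hxim] at hx'
        have : |2 * c| = 2 * |c| := by rw [abs_mul]; norm_num
        rw [this] at hx'
        linarith
      · have := hmap₂ (g₀⁻¹ * g₂) (mul_mem (inv_mem hg₀2) hg₂) hmem y hyH
        rw [mul_smul, hkey, inv_smul_smul] at this
        linarith
    · push_neg at hex
      refine ⟨(h ^ k) • 0, Set.smul_mem_smul_set (show |(0:ℂ).im| ≤ 1 by simp), ?_⟩
      intro g hg hg0 x hx heq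
      obtain ⟨g₂, hg₂, rfl⟩ := hG₂'mem g hg
      exact hG₂'out g₂ hg0 (hex g₂ hg₂)
  obtain ⟨θ₁, hθ₁Θ, hθ₁p⟩ := h8
  obtain ⟨θ₂, hθ₂Θ, hθ₂p⟩ := h9
  refine ⟨⟨h1, h2, h3, h4, h5, h6, h7, ⟨θ₁, hθ₁Θ, hθ₁p⟩, ⟨θ₂, hθ₂Θ, hθ₂p⟩⟩, ?_⟩
  intro hle
  set L := Monoid.PushoutI.lift (φ := fun b : Bool => Subgroup.inclusion (hle b))
      (fun b => (if b then G₁ else G₂' : Subgroup Γ).subtype) G₀.subtype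
      (fun b => MonoidHom.ext fun x => rfl) with hLdef
  rw [injective_iff_map_eq_one]
  intro g hg
  have hφinj : ∀ b : Bool, Function.Injective ((fun b : Bool => Subgroup.inclusion (hle b)) b) :=
    fun b => Subgroup.inclusion_injective _
  obtain ⟨d⟩ := Monoid.PushoutI.NormalWord.transversal_nonempty
    (fun b : Bool => Subgroup.inclusion (hle b)) hφinj
  set w : Monoid.PushoutI.NormalWord d := Monoid.PushoutI.NormalWord.equiv g with hwdef
  have hprodg : w.prod = g := Equiv.symm_apply_apply Monoid.PushoutI.NormalWord.equiv g
  have hword : ∀ l : List (Σ b : Bool, ↥(if b then G₁ else G₂')),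
      L (Monoid.PushoutI.ofCoprodI (List.prod (l.map fun p => Monoid.CoprodI.of p.2)))
        = (l.map fun p => (p.2 : Γ)).prod := by
    intro l
    induction l with
    | nil => simp
    | cons p l ih =>
      rw [List.map_cons, List.prod_cons, map_mul, map_mul, ih,
        Monoid.PushoutI.ofCoprodI_of, List.map_cons, List.prod_cons]
      congr 1
  have hLg : L g = (w.head : Γ) * (w.toWord.toList.map fun l => (l.2 : Γ)).prod := by
    conv_lhs => rw [← hprodg]
    show L (Monoid.PushoutI.base _ w.head * Monoid.PushoutI.ofCoprodI w.toWord.prod) = _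
    rw [map_mul, Monoid.PushoutI.lift_base]
    exact congrArg (_ * ·) (hword w.toWord.toList)
  have hletter : ∀ p ∈ w.toWord.toList,
      (p.2 : Γ) ∈ (if p.1 then G₁ else G₂' : Subgroup Γ) ∧ (p.2 : Γ) ∉ Subgroup.zpowers t := by
    rintro ⟨b, gb⟩ hp
    refine ⟨gb.2, ?_⟩
    intro hmem
    have hset := w.normalized b gb hp
    have hne1 : gb ≠ 1 := w.toWord.ne_one ⟨b, gb⟩ hp
    have h1R : gb ∈ ((fun b : Bool => Subgroup.inclusion (hle b)) b).range :=
      ⟨⟨(gb : Γ), hmem⟩, rfl⟩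
    have heq := (d.compl b).1
      (a₁ := (⟨gb, h1R⟩, ⟨1, d.one_mem b⟩)) (a₂ := (⟨1, one_mem _⟩, ⟨gb, hset⟩)) (by simp)
    have hgb1 : gb = 1 := by
      have h2 := congrArg (fun z => z.1.1) heq
      simpa using h2
    exact hne1 hgb1
  rcases hlist : w.toWord.toList with _ | ⟨l₀, ls⟩
  · -- empty word: g is in the base group
    have hprod1 : w.toWord.prod = 1 := by
      simp only [Monoid.CoprodI.Word.prod, hlist, List.map_nil, List.prod_nil]
    have hgbase : g = Monoid.PushoutI.base (fun b : Bool => Subgroup.inclusion (hle b)) w.head := by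
      conv_lhs => rw [← hprodg]
      show Monoid.PushoutI.base _ w.head * Monoid.PushoutI.ofCoprodI w.toWord.prod = _
      rw [hprod1, map_one, mul_one]
    rw [hgbase] at hg ⊢
    rw [Monoid.PushoutI.lift_base] at hg
    have : w.head = 1 := by
      have : (w.head : Γ) = 1 := hg
      exact_mod_cast this
    rw [this, map_one]
  · -- nonempty word: ping-pong
    exfalso
    set q₀ : Bool × Γ := (l₀.1, (w.head : Γ) * (l₀.2 : Γ)) with hq₀def
    set LL : List (Bool × Γ) := q₀ :: ls.map (fun p => (p.1, (p.2 : Γ))) with hLLdef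
    have hl₀mem : l₀ ∈ w.toWord.toList := by rw [hlist]; exact List.mem_cons_self
    have hheadG₀ : (w.head : Γ) ∈ Subgroup.zpowers t := w.head.2
    -- the predicate and sets for ping-pong
    set P : Bool → Γ → Prop := fun b gg =>
      gg ∈ (if b then G₁ else G₂' : Subgroup Γ) ∧ gg ∉ Subgroup.zpowers t with hPdef
    set Tset : Bool → Set ℂ := fun b => if b then Θ₁ else Θ₂ with hTdef
    set θpt : Bool → ℂ := fun b => if b then θ₁ else θ₂ with hθdef
    have hθT : ∀ b, θpt b ∈ Tset b := by
      intro b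
      cases b
      · exact hθ₂Θ
      · exact hθ₁Θ
    have hmove : ∀ b gg, P b gg → ∀ x ∈ Tset (!b), gg • x ∈ Tset b := by
      intro b gg hP x hx
      cases b
      · exact h7 gg hP.1 hP.2 x hx
      · exact h6 gg hP.1 hP.2 x hx
    have hprop : ∀ b gg, P b gg → ∀ x ∈ Tset (!b), gg • x ≠ θpt b := by
      intro b gg hP x hx
      cases b
      · exact hθ₂p gg hP.1 hP.2 x hx
      · exact hθ₁p gg hP.1 hP.2 x hx
    have hdisj2 : ∀ b (z : ℂ), z ∈ Tset b → z ∈ Tset (!b) → False := by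
      intro b z hz1 hz2
      cases b
      · exact Set.eq_empty_iff_forall_notMem.1 h3 z ⟨hz2, hz1⟩
      · exact Set.eq_empty_iff_forall_notMem.1 h3 z ⟨hz1, hz2⟩
    -- P holds for all entries of LL
    have hPall : ∀ q ∈ LL, P q.1 q.2 := by
      intro q hq
      rcases List.mem_cons.1 hq with rfl | hq
      · constructor
        · exact mul_mem (hle l₀.1 hheadG₀) (hletter l₀ hl₀mem).1
        · intro hmem
          exact (hletter l₀ hl₀mem).2
            (by
              have : (l₀.2 : Γ) = (w.head : Γ)⁻¹ * ((w.head : Γ) * (l₀.2 : Γ)) := by group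
              rw [this]
              exact mul_mem (inv_mem hheadG₀) hmem)
      · obtain ⟨p, hp, rfl⟩ := List.mem_map.1 hq
        have hp' : p ∈ w.toWord.toList := by
          rw [hlist]
          exact List.mem_cons_of_mem _ hp
        exact ⟨(hletter p hp').1, (hletter p hp').2⟩
    -- chain condition
    have hchainLL : LL.Chain' (fun a b => a.1 ≠ b.1) := by
      have hc := w.toWord.chain_ne
      rw [hlist] at hc
      obtain ⟨hhd, htl⟩ := List.isChain_cons.1 hc
      refine List.isChain_cons.2 ⟨?_, ?_⟩
      · intro y hy
        rw [List.head?_map] at hy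
        obtain ⟨z, hz, rfl⟩ := Option.map_eq_some_iff.1 hy
        exact hhd z hz
      · rw [List.isChain_map]
        exact htl
    -- apply the ping-pong lemma
    obtain ⟨x, hx1, hx2, hx3⟩ := km_pingpong P Tset θpt hθT hmove hprop
      (ls.map (fun p => (p.1, (p.2 : Γ)))) q₀ hPall hchainLL
    have hLL : (LL.map Prod.snd).prod = L g := by
      rw [hLg, hlist]
      simp only [hLLdef, hq₀def, List.map_cons, List.prod_cons, List.map_map]
      rw [mul_assoc]
      rfl
    have hfix : (LL.map Prod.snd).prod • x = x := by
      rw [hLL, hg, one_smul]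
    rw [hfix] at hx1 hx2
    rcases hx3 with h3x | h3x
    · cases hb : q₀.1
      · rw [hb] at hx1
        refine hdisj2 false x hx1 ?_
        rw [h3x]
        exact hθT true
      · rw [hb] at hx2
        exact hx2 h3x
    · cases hb : q₀.1
      · rw [hb] at hx2
        exact hx2 h3x
      · rw [hb] at hx1
        refine hdisj2 true x hx1 ?_
        rw [h3x]
        exact hθT false
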